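/- For all integers k ≥ 2 and all integers q with 1 ≤ q ≤ 10^{k−2}, the graph G_{q,k} satisfies (1/m)·Σ_{h ∈ E(G_{q,k})} C_{G_{q,k}}(h) ≤ −3/10, where m = N_k + 2q + 1 is the number of edges of G_{q,k}. In particular, for every step size s > 0, the normalization correction term (s/m)·Σ_{h ∈ E} C_{G_{q,k}}(h) of the normalized Ricci flow is at most −(3/10)·s. (This is the corrected, rigorous form of the concluding estimate in the proof of the paper's Theorem 1, which asserts that the average Ollivier–Ricci curvature of G_n is bounded away from 0 by a negative constant as n → ∞.) -/

import Mathlib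

/-- Earth Mover's Distance between two distributions `μ ν : V → ℝ` w.r.t. a
cost function `d : V → V → ℝ`: the minimum (infimum) of the total transport cost
over all feasible transport plans. -/
noncomputable def EMD {V : Type} (d : V → V → ℝ) (μ ν : V → ℝ) : ℝ :=
  sInf { c : ℝ | ∃ z : V → V → ℝ,
    (∀ u v, 0 ≤ z u v) ∧ (∀ u, ∑ᶠ v, z u v = μ u) ∧ (∀ v, ∑ᶠ u, z u v = ν v) ∧
    c = ∑ᶠ u, ∑ᶠ v, d u v * z u v }

/-- The degree of a vertex: the number of its neighbours. -/
noncomputable def degC {V : Type} (G : SimpleGraph V) (u : V) : ℕ :=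
  Nat.card {x | G.Adj u x}

open Classical in
/-- The uniform probability distribution on the closed neighbourhood of `u`. -/
noncomputable def Pdist {V : Type} (G : SimpleGraph V) (u : V) : V → ℝ :=
  fun w => if w = u ∨ G.Adj u w then ((degC G u : ℝ) + 1)⁻¹ else 0

/-- The graph distance, as a real-valued cost function. -/
noncomputable def gdist {V : Type} (G : SimpleGraph V) : V → V → ℝ :=
  fun a b => (G.dist a b : ℝ)

/-- The total variation distance between the closed-neighbourhood distributions of `u`, `v`. -/
noncomputable def tvd {V : Type} (G : SimpleGraph V) (u v : V) : ℝ :=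
  (1 / 2) * ∑ᶠ w, |Pdist G u w - Pdist G v w|

/-- The Ollivier–Ricci curvature of the (ordered) pair `u v`. -/
noncomputable def ricci {V : Type} (G : SimpleGraph V) (u v : V) : ℝ :=
  1 - EMD (gdist G) (Pdist G u) (Pdist G v)

lemma EMD_comm {V : Type} [Finite V] (d : V → V → ℝ) (hd : ∀ a b, d a b = d b a)
    (μ ν : V → ℝ) : EMD d μ ν = EMD d ν μ := by
  cases nonempty_fintype V
  unfold EMD
  congr 1
  ext c
  simp only [Set.mem_setOf_eq]
  constructor <;> rintro ⟨z, h0, h1, h2, rfl⟩ <;>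
    refine ⟨fun a b => z b a, fun a b => h0 b a, h2, h1, ?_⟩ <;>
    · simp only [finsum_eq_sum_of_fintype]
      rw [Finset.sum_comm]
      exact Finset.sum_congr rfl fun a _ => Finset.sum_congr rfl fun b _ => by rw [hd]

/-- The Ollivier–Ricci curvature as a function on edges (elements of `Sym2 V`). -/
noncomputable def ricciEdge {V : Type} [Finite V] (G : SimpleGraph V) : Sym2 V → ℝ :=
  Sym2.lift ⟨fun u v => ricci G u v, fun u v => by
    show ricci G u v = ricci G v u
    unfold ricci
    rw [EMD_comm (gdist G) (fun a b => by unfold gdist; rw [SimpleGraph.dist_comm])]⟩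

/-- Vertices of the complete 10-ary tree of depth `k`: lists over `Fin 10` of length
at most `k`, recording the (reversed) path from the root `[]`. -/
def TreeVert (k : ℕ) : Type := { l : List (Fin 10) // l.length ≤ k }

instance (k : ℕ) : DecidableEq (TreeVert k) :=
  inferInstanceAs (DecidableEq { l : List (Fin 10) // l.length ≤ k })

instance (k : ℕ) : Fintype (TreeVert k) :=
  Fintype.ofSurjective
    (fun x : Σ j : Fin (k + 1), List.Vector (Fin 10) j =>
      (⟨x.2.1, by have h1 := x.2.2; have h2 := x.1.isLt; omega⟩ : TreeVert k))
    (fun y => ⟨⟨⟨y.1.length, Nat.lt_succ_of_le y.2⟩, ⟨y.1, rfl⟩⟩, Subtype.ext rfl⟩)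

/-- The root of the tree. -/
def treeRoot (k : ℕ) : TreeVert k := ⟨[], by simp⟩

/-- The parent of a tree vertex (the root is mapped to itself). -/
def treeParent {k : ℕ} (x : TreeVert k) : TreeVert k :=
  ⟨x.1.tail, by have h1 := x.2; have h2 : x.1.tail.length = x.1.length - 1 := List.length_tail; omega⟩

/-- The vertex set of the graph `G_{q,k}`: the two special vertices `s`, `t`
(encoded as `Fin 2`), the vertices `p_1, …, p_q`, and the tree vertices. -/
abbrev GVert (q k : ℕ) : Type := (Fin 2 ⊕ Fin q) ⊕ TreeVert k

def vS (q k : ℕ) : GVert q k := Sum.inl (Sum.inl 0)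
def vT (q k : ℕ) : GVert q k := Sum.inl (Sum.inl 1)
def vP (q k : ℕ) (i : Fin q) : GVert q k := Sum.inl (Sum.inr i)
def vTr (q k : ℕ) (x : TreeVert k) : GVert q k := Sum.inr x

/-- Base adjacency relation generating the edges of `G_{q,k}`: the edge `{s,t}`,
the edges `{p_i, s}` and `{p_i, t}`, the bridge `{t, r_1}` to the root of the tree,
and the parent-child tree edges. -/
def gadjBase (q k : ℕ) : GVert q k → GVert q k → Prop := fun x y =>
  (x = vS q k ∧ y = vT q k) ∨
  (∃ i : Fin q, x = vP q k i ∧ (y = vS q k ∨ y = vT q k)) ∨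
  (x = vT q k ∧ y = vTr q k (treeRoot k)) ∨
  (∃ u v : TreeVert k, x = vTr q k u ∧ y = vTr q k v ∧ ∃ a : Fin 10, u.1 = a :: v.1)

/-- The graph `G_{q,k}` from the proof of the paper's Theorem 1
(with `q` playing the role of `√n`). -/
def Gqk (q k : ℕ) : SimpleGraph (GVert q k) := SimpleGraph.fromRel (gadjBase q k)

/-- `N_k = (10^(k+1) - 1)/9`, the number of vertices of the complete 10-ary tree of depth `k`. -/
def Nk (k : ℕ) : ℕ := (10 ^ (k + 1) - 1) / 9

section General
open Finset

lemma EMD_ge {V : Type} [Fintype V] (d : V → V → ℝ) (μ ν : V → ℝ) (f : V → ℝ)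
    (hμ0 : ∀ a, 0 ≤ μ a) (hν0 : ∀ a, 0 ≤ ν a)
    (hμ1 : ∑ᶠ a, μ a = 1) (hν1 : ∑ᶠ a, ν a = 1)
    (hf : ∀ a b, f a - f b ≤ d a b) :
    (∑ᶠ a, f a * μ a) - ∑ᶠ b, f b * ν b ≤ EMD d μ ν := by
  classical
  rw [finsum_eq_sum_of_fintype, finsum_eq_sum_of_fintype]
  have hμ1' : ∑ a, μ a = 1 := by rw [← hμ1, finsum_eq_sum_of_fintype]
  have hν1' : ∑ a, ν a = 1 := by rw [← hν1, finsum_eq_sum_of_fintype]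
  apply le_csInf
  · refine ⟨∑ᶠ u, ∑ᶠ v, d u v * (μ u * ν v), fun a b => μ a * ν b,
      fun a b => mul_nonneg (hμ0 a) (hν0 b), ?_, ?_, rfl⟩
    · intro u
      rw [finsum_eq_sum_of_fintype, ← Finset.mul_sum, hν1', mul_one]
    · intro v
      rw [finsum_eq_sum_of_fintype, ← Finset.sum_mul, hμ1', one_mul]
  · rintro c ⟨z, hz0, hz1, hz2, rfl⟩
    have hz1' : ∀ u, ∑ v, z u v = μ u := fun u => by rw [← hz1 u, finsum_eq_sum_of_fintype]
    have hz2' : ∀ v, ∑ u, z u v = ν v := fun v => by rw [← hz2 v, finsum_eq_sum_of_fintype]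
    have hgoal : (∑ᶠ u, ∑ᶠ v, d u v * z u v) = ∑ u, ∑ v, d u v * z u v := by
      rw [finsum_eq_sum_of_fintype]
      exact Finset.sum_congr rfl fun u _ => finsum_eq_sum_of_fintype _
    rw [hgoal]
    have h1 : (∑ u, ∑ v, (f u - f v) * z u v) ≤ ∑ u, ∑ v, d u v * z u v :=
      Finset.sum_le_sum fun u _ => Finset.sum_le_sum fun v _ =>
        mul_le_mul_of_nonneg_right (hf u v) (hz0 u v)
    have h2 : (∑ u, ∑ v, (f u - f v) * z u v)
        = (∑ u, f u * μ u) - ∑ v, f v * ν v := by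
      have e1 : (∑ u, ∑ v, (f u - f v) * z u v)
          = (∑ u, ∑ v, f u * z u v) - ∑ u, ∑ v, f v * z u v := by
        rw [← Finset.sum_sub_distrib]
        refine Finset.sum_congr rfl fun u _ => ?_
        rw [← Finset.sum_sub_distrib]
        refine Finset.sum_congr rfl fun v _ => by ring
      rw [e1, Finset.sum_comm (f := fun u v => f v * z u v)]
      congr 1
      · refine Finset.sum_congr rfl fun u _ => ?_
        rw [← Finset.mul_sum, hz1' u]
      · refine Finset.sum_congr rfl fun v _ => ?_
        rw [← Finset.mul_sum, hz2' v]
    linarith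

lemma EMD_nonneg {V : Type} (d : V → V → ℝ) (μ ν : V → ℝ) (hd : ∀ a b, 0 ≤ d a b) :
    0 ≤ EMD d μ ν := by
  apply Real.sInf_nonneg
  rintro c ⟨z, hz0, _, _, rfl⟩
  apply finsum_nonneg; intro u
  apply finsum_nonneg; intro v
  exact mul_nonneg (hd u v) (hz0 u v)

lemma ricci_le_one {V : Type} (G : SimpleGraph V) (u v : V) : ricci G u v ≤ 1 := by
  unfold ricci
  have := EMD_nonneg (gdist G) (Pdist G u) (Pdist G v)
    (fun a b => by unfold gdist; positivity)
  linarith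

lemma lipschitz_le_gdist {V : Type} (G : SimpleGraph V) (f : V → ℝ)
    (hf : ∀ a b, G.Adj a b → |f a - f b| ≤ 1) (hr : ∀ a b : V, G.Reachable a b) :
    ∀ a b, f a - f b ≤ gdist G a b := by
  have key : ∀ (a b : V) (p : G.Walk a b), f a - f b ≤ p.length := by
    intro a b p
    induction p with
    | nil => simp
    | @cons a c b h p ih =>
      have h1 := hf a c h
      have h2 := abs_le.mp h1
      simp only [SimpleGraph.Walk.length_cons]
      push_cast
      linarith
  intro a b
  obtain ⟨p, hp⟩ := (hr a b).exists_walk_length_eq_dist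
  calc f a - f b ≤ p.length := key a b p
    _ = gdist G a b := by rw [hp]; rfl

end General
section PdistFacts
open Finset

lemma degC_eq {V : Type} [Fintype V] [DecidableEq V] (G : SimpleGraph V) (u : V)
    (S : Finset V) (hS : ∀ w, G.Adj u w ↔ w ∈ S) : degC G u = S.card := by
  have : {x | G.Adj u x} = (S : Set V) := by ext w; simp [hS w]
  rw [degC, this, Nat.card_coe_set_eq, Set.ncard_coe_finset]

lemma pdist_sum_mul {V : Type} [Fintype V] [DecidableEq V] (G : SimpleGraph V) (u : V)
    (S : Finset V) (hS : ∀ w, G.Adj u w ↔ w ∈ S) (g : V → ℝ) :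
    ∑ᶠ w, g w * Pdist G u w = ((S.card : ℝ) + 1)⁻¹ * (g u + ∑ w ∈ S, g w) := by
  classical
  have huS : u ∉ S := fun h => G.loopless.irrefl u ((hS u).mpr h)
  have hP : ∀ w, Pdist G u w = if w ∈ insert u S then ((S.card : ℝ) + 1)⁻¹ else 0 := by
    intro w
    rw [Pdist, degC_eq G u S hS]
    congr 1
    simp [Finset.mem_insert, hS w]
  rw [finsum_eq_sum_of_fintype]
  rw [← Finset.sum_subset (Finset.subset_univ (insert u S))
    (f := fun w => g w * Pdist G u w) ?zero]
  case zero =>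
    intro w _ hw
    simp only [hP w, if_neg hw, mul_zero]
  have : ∀ w ∈ insert u S, g w * Pdist G u w = g w * ((S.card : ℝ) + 1)⁻¹ := by
    intro w hw; rw [hP w, if_pos hw]
  rw [Finset.sum_congr rfl this, ← Finset.sum_mul, Finset.sum_insert huS]
  ring

lemma pdist_sum_one {V : Type} [Fintype V] [DecidableEq V] (G : SimpleGraph V) (u : V)
    (S : Finset V) (hS : ∀ w, G.Adj u w ↔ w ∈ S) : ∑ᶠ w, Pdist G u w = 1 := by
  have h := pdist_sum_mul G u S hS (fun _ => 1)
  simp only [one_mul] at h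
  rw [h, Finset.sum_const, nsmul_eq_mul, mul_one]
  rw [inv_mul_eq_div, div_eq_one_iff_eq]
  · ring
  · positivity

lemma pdist_nonneg {V : Type} (G : SimpleGraph V) (u w : V) : 0 ≤ Pdist G u w := by
  rw [Pdist]
  split <;> positivity

lemma ricci_le_of {V : Type} [Fintype V] [DecidableEq V] (G : SimpleGraph V) (u v : V)
    (f : V → ℝ) (Su Sv : Finset V)
    (hSu : ∀ w, G.Adj u w ↔ w ∈ Su) (hSv : ∀ w, G.Adj v w ↔ w ∈ Sv)
    (hf : ∀ a b, G.Adj a b → |f a - f b| ≤ 1) (hr : ∀ a b : V, G.Reachable a b) :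
    ricci G u v ≤ 1 - (((Su.card : ℝ) + 1)⁻¹ * (f u + ∑ w ∈ Su, f w)
      - ((Sv.card : ℝ) + 1)⁻¹ * (f v + ∑ w ∈ Sv, f w)) := by
  have h := EMD_ge (gdist G) (Pdist G u) (Pdist G v) f
    (pdist_nonneg G u) (pdist_nonneg G v)
    (pdist_sum_one G u Su hSu) (pdist_sum_one G v Sv hSv)
    (lipschitz_le_gdist G f hf hr)
  rw [pdist_sum_mul G u Su hSu f, pdist_sum_mul G v Sv hSv f] at h
  rw [ricci]
  linarith

end PdistFacts
section GqkStructure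
open Finset

lemma gqk_adj {q k : ℕ} (x y : GVert q k) :
    (Gqk q k).Adj x y ↔ x ≠ y ∧ (gadjBase q k x y ∨ gadjBase q k y x) :=
  SimpleGraph.fromRel_adj _ _ _

lemma vS_ne_vT (q k : ℕ) : vS q k ≠ vT q k := by
  simp [vS, vT, Fin.ext_iff]

lemma adj_tree_iff {q k : ℕ} (x : TreeVert k) (w : GVert q k) :
    (Gqk q k).Adj (vTr q k x) w ↔
      (x.1 = [] ∧ w = vT q k) ∨
      (∃ y : TreeVert k, w = vTr q k y ∧
        ∃ a : Fin 10, x.1 = a :: y.1 ∨ y.1 = a :: x.1) := by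
  rw [gqk_adj]
  constructor
  · rintro ⟨hne, h | h⟩
    · rcases h with ⟨h1, -⟩ | ⟨i, h1, -⟩ | ⟨h1, -⟩ | ⟨u', v', h1, h2, a, h3⟩
      · exact absurd h1 (by simp [vTr, vS])
      · exact absurd h1 (by simp [vTr, vP])
      · exact absurd h1 (by simp [vTr, vT])
      · have hu : u' = x := by
          have := h1; simp only [vTr, Sum.inr.injEq] at this; exact this.symm
        subst hu
        exact Or.inr ⟨v', h2, a, Or.inl h3⟩
    · rcases h with ⟨h1, h2⟩ | ⟨i, h1, h2 | h2⟩ | ⟨h1, h2⟩ | ⟨u', v', h1, h2, a, h3⟩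
      · exact absurd h2 (by simp [vTr, vT])
      · exact absurd h2 (by simp [vTr, vS])
      · exact absurd h2 (by simp [vTr, vT])
      · have hx : x = treeRoot k := by
          simp only [vTr, Sum.inr.injEq] at h2; first | exact h2 | exact h2.symm
        exact Or.inl ⟨by rw [hx]; rfl, h1⟩
      · have hv : v' = x := by
          simp only [vTr, Sum.inr.injEq] at h2; first | exact h2 | exact h2.symm
        subst hv
        exact Or.inr ⟨u', h1, a, Or.inr h3⟩
  · rintro (⟨h1, rfl⟩ | ⟨y, rfl, a, h | h⟩)
    · refine ⟨by simp [vTr, vT], Or.inr ?_⟩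
      right; right; left
      exact ⟨rfl, by rw [show treeRoot k = x from (Subtype.ext h1.symm)]⟩
    · refine ⟨?_, Or.inl ?_⟩
      · simp only [vTr, ne_eq, Sum.inr.injEq]
        intro he
        have := congrArg (fun z : TreeVert k => z.1.length) he
        simp [h] at this
      · right; right; right
        exact ⟨x, y, rfl, rfl, a, h⟩
    · refine ⟨?_, Or.inr ?_⟩
      · simp only [vTr, ne_eq, Sum.inr.injEq]
        intro he
        have := congrArg (fun z : TreeVert k => z.1.length) he
        simp [h] at this
      · right; right; right
        exact ⟨y, x, rfl, rfl, a, h⟩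

lemma reach_t {q k : ℕ} : ∀ (l : List (Fin 10)) (h : l.length ≤ k),
    (Gqk q k).Reachable (vT q k) (vTr q k ⟨l, h⟩)
  | [], h => by
    apply SimpleGraph.Adj.reachable
    rw [gqk_adj]
    refine ⟨by simp [vTr, vT], Or.inl ?_⟩
    right; right; left
    exact ⟨rfl, rfl⟩
  | a :: l, h => by
    have hl : l.length ≤ k := by
      have := h; simp only [List.length_cons] at this; omega
    refine (reach_t l hl).trans (SimpleGraph.Adj.reachable ?_)
    refine (adj_tree_iff _ _).mpr ?_
    exact Or.inr ⟨⟨a :: l, h⟩, rfl, a, Or.inr rfl⟩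

lemma gqk_reachable {q k : ℕ} : ∀ a b : GVert q k, (Gqk q k).Reachable a b := by
  have ht : ∀ a : GVert q k, (Gqk q k).Reachable (vT q k) a := by
    intro a
    match a with
    | Sum.inl (Sum.inl i) =>
      fin_cases i
      · exact (SimpleGraph.Adj.reachable (by
          rw [gqk_adj]
          exact ⟨(vS_ne_vT q k).symm, Or.inr (Or.inl ⟨rfl, rfl⟩)⟩))
      · rfl
    | Sum.inl (Sum.inr i) =>
      refine SimpleGraph.Adj.reachable ?_
      rw [gqk_adj]
      refine ⟨by simp [vT, vP], Or.inr ?_⟩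
      right; left
      exact ⟨i, rfl, Or.inr rfl⟩
    | Sum.inr x => exact reach_t x.1 x.2
  intro a b
  exact (ht a).symm.trans (ht b)

end GqkStructure
section Neighborhoods
open Finset

/-- children of an internal tree vertex, as graph vertices -/
def childFinset (q k : ℕ) (x : TreeVert k) (h : x.1.length < k) : Finset (GVert q k) :=
  Finset.image (fun a : Fin 10 => vTr q k ⟨a :: x.1, by simpa using h⟩) Finset.univ

/-- the "upward" neighbour of a tree vertex -/
def upVert (q k : ℕ) (x : TreeVert k) : GVert q k :=
  if x.1 = [] then vT q k else vTr q k (treeParent x)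

lemma vTr_inj {q k : ℕ} {x y : TreeVert k} (h : vTr q k x = vTr q k y) : x = y := by
  simpa [vTr] using h

lemma nbr_leaf {q k : ℕ} (x : TreeVert k) (hx : x.1.length = k) (hk : 1 ≤ k) :
    ∀ w, (Gqk q k).Adj (vTr q k x) w ↔
      w ∈ ({vTr q k (treeParent x)} : Finset (GVert q k)) := by
  intro w
  rw [adj_tree_iff, Finset.mem_singleton]
  constructor
  · rintro (⟨h1, h2⟩ | ⟨y, rfl, a, h | h⟩)
    · rw [h1] at hx; simp at hx; omega
    · congr 1
      exact Subtype.ext (by simp [treeParent, h])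
    · exfalso
      have := y.2
      rw [h] at this
      simp [hx] at this
  · rintro rfl
    right
    have hne : x.1 ≠ [] := by intro h; rw [h] at hx; simp at hx; omega
    refine ⟨treeParent x, rfl, x.1.head hne, Or.inl ?_⟩
    show x.1 = x.1.head hne :: x.1.tail
    exact (List.cons_head_tail hne).symm

lemma nbr_internal {q k : ℕ} (x : TreeVert k) (hx : x.1.length < k) :
    ∀ w, (Gqk q k).Adj (vTr q k x) w ↔
      w ∈ insert (upVert q k x) (childFinset q k x hx) := by
  intro w
  rw [adj_tree_iff, Finset.mem_insert]
  constructor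
  · rintro (⟨h1, rfl⟩ | ⟨y, rfl, a, h | h⟩)
    · left; rw [upVert, if_pos h1]
    · left
      have hne : x.1 ≠ [] := by rw [h]; simp
      rw [upVert, if_neg hne]
      congr 1
      exact Subtype.ext (by simp [treeParent, h])
    · right
      rw [childFinset, Finset.mem_image]
      exact ⟨a, Finset.mem_univ a, by congr 1; exact Subtype.ext h.symm⟩
  · rintro (rfl | hw)
    · rw [upVert]
      split
      · exact Or.inl ⟨by assumption, rfl⟩
      · right
        have hne : x.1 ≠ [] := by assumption
        refine ⟨treeParent x, rfl, x.1.head hne, Or.inl ?_⟩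
        show x.1 = x.1.head hne :: x.1.tail
        exact (List.cons_head_tail hne).symm
    · rw [childFinset, Finset.mem_image] at hw
      obtain ⟨a, -, rfl⟩ := hw
      exact Or.inr ⟨_, rfl, a, Or.inr rfl⟩

lemma card_childFinset {q k : ℕ} (x : TreeVert k) (hx : x.1.length < k) :
    (childFinset q k x hx).card = 10 := by
  rw [childFinset, Finset.card_image_of_injective _ ?_, Finset.card_univ, Fintype.card_fin]
  intro a b hab
  have := vTr_inj hab
  have := congrArg (fun z : TreeVert k => z.1) this
  simpa using this

lemma up_not_child {q k : ℕ} (x : TreeVert k) (hx : x.1.length < k) :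
    upVert q k x ∉ childFinset q k x hx := by
  rw [childFinset, Finset.mem_image]
  rintro ⟨a, -, ha⟩
  rw [upVert] at ha
  split at ha
  · exact absurd ha (by simp [vT, vTr])
  · have := congrArg (fun z : TreeVert k => z.1.length) (vTr_inj ha)
    simp only [treeParent, List.length_tail, List.length_cons] at this
    have hne : x.1 ≠ [] := by assumption
    have : x.1.length ≠ 0 := by simpa using hne
    omega

lemma card_nbr_internal {q k : ℕ} (x : TreeVert k) (hx : x.1.length < k) :
    (insert (upVert q k x) (childFinset q k x hx)).card = 11 := by
  rw [Finset.card_insert_of_notMem (up_not_child x hx), card_childFinset]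

end Neighborhoods
section Potentials
open Finset

noncomputable def fLeaf (q k : ℕ) (v : TreeVert k) : GVert q k → ℝ :=
  fun w => if w = vTr q k v then 2 else if w = vTr q k (treeParent v) then 1 else 0

lemma vTr_ne_parent {q k : ℕ} (v : TreeVert k) (hv : v.1 ≠ []) :
    vTr q k v ≠ vTr q k (treeParent v) := by
  intro h
  have := congrArg (fun z : TreeVert k => z.1.length) (vTr_inj h)
  simp only [treeParent, List.length_tail] at this
  have : v.1.length ≠ 0 := by simpa using hv
  omega

lemma fLeaf_lip {q k : ℕ} (v : TreeVert k) (hv : v.1.length = k) (hk : 1 ≤ k) :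
    ∀ a b, (Gqk q k).Adj a b → |fLeaf q k v a - fLeaf q k v b| ≤ 1 := by
  have hvne : v.1 ≠ [] := by
    intro h; rw [h] at hv; simp at hv; omega
  have hvp := vTr_ne_parent (q := q) v hvne
  have key : ∀ b, (Gqk q k).Adj (vTr q k v) b → b = vTr q k (treeParent v) := by
    intro b hb
    simpa using (nbr_leaf v hv hk b).mp hb
  have hpv : vTr q k (treeParent v) ≠ vTr q k v := fun h => hvp h.symm
  have val_vp : fLeaf q k v (vTr q k (treeParent v)) = 1 := by
    simp [fLeaf, hpv]
  have val_v : fLeaf q k v (vTr q k v) = 2 := by rw [fLeaf]; simp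
  intro a b hab
  by_cases hA : a = vTr q k v
  · subst hA
    rw [key b hab, val_v, val_vp]
    norm_num
  · by_cases hB : b = vTr q k v
    · subst hB
      rw [key a hab.symm, val_v, val_vp]
      norm_num
    · simp only [fLeaf, if_neg hA, if_neg hB]
      split_ifs <;> norm_num

noncomputable def fInt (q k : ℕ) (v : TreeVert k) : GVert q k → ℝ := fun w =>
  match w with
  | Sum.inl _ => 0
  | Sum.inr x => if v.1 <:+ x.1 then (if x = v then 2 else 3)
                 else (if x = treeParent v then 1 else 0)

lemma fInt_apply {q k : ℕ} (v x : TreeVert k) :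
    fInt q k v (vTr q k x) = if v.1 <:+ x.1 then (if x = v then 2 else 3)
      else (if x = treeParent v then 1 else 0) := rfl

lemma fInt_apply_inl {q k : ℕ} (v : TreeVert k) (w) :
    fInt q k v (Sum.inl w) = 0 := rfl

lemma fInt_lip {q k : ℕ} (v : TreeVert k) (hv : v.1 ≠ []) :
    ∀ a b, (Gqk q k).Adj a b → |fInt q k v a - fInt q k v b| ≤ 1 := by
  have pair : ∀ (x y : TreeVert k) (a0 : Fin 10), x.1 = a0 :: y.1 →
      |fInt q k v (vTr q k x) - fInt q k v (vTr q k y)| ≤ 1 := by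
    intro x y a0 hxy
    rw [fInt_apply, fInt_apply]
    by_cases h1 : v.1 <:+ y.1
    · have hsx : v.1 <:+ x.1 := by
        rw [hxy]; exact h1.trans (List.suffix_cons a0 y.1)
      have hxv : x ≠ v := by
        intro h
        have h2 := h1.length_le
        have h3 : x.1.length = y.1.length + 1 := by rw [hxy]; rfl
        rw [h] at h3
        omega
      rw [if_pos hsx, if_neg hxv, if_pos h1]
      split_ifs <;> norm_num
    · rw [if_neg h1]
      by_cases h2 : v.1 <:+ x.1
      · have hvx : v.1 = x.1 := by
          rw [hxy] at h2
          rcases List.suffix_cons_iff.mp h2 with h | h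
          · rw [h, ← hxy]
          · exact absurd h h1
        have hxv : x = v := Subtype.ext hvx.symm
        have hy : y = treeParent v := by
          refine Subtype.ext ?_
          show y.1 = v.1.tail
          rw [hvx, hxy]
          rfl
        rw [if_pos h2, if_pos hxv, if_pos hy]
        norm_num
      · rw [if_neg h2]
        split_ifs <;> norm_num
  have fbase : ∀ a b, gadjBase q k a b →
      |fInt q k v a - fInt q k v b| ≤ 1 := by
    rintro a b (⟨rfl, rfl⟩ | ⟨i, rfl, rfl | rfl⟩ | ⟨rfl, rfl⟩ | ⟨x, y, rfl, rfl, a0, hxy⟩)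
    · rw [show vS q k = Sum.inl (Sum.inl 0) from rfl, show vT q k = Sum.inl (Sum.inl 1) from rfl,
        fInt_apply_inl, fInt_apply_inl]
      norm_num
    · rw [show vP q k i = Sum.inl (Sum.inr i) from rfl, show vS q k = Sum.inl (Sum.inl 0) from rfl,
        fInt_apply_inl, fInt_apply_inl]
      norm_num
    · rw [show vP q k i = Sum.inl (Sum.inr i) from rfl, show vT q k = Sum.inl (Sum.inl 1) from rfl,
        fInt_apply_inl, fInt_apply_inl]
      norm_num
    · rw [show vT q k = Sum.inl (Sum.inl 1) from rfl, fInt_apply_inl, fInt_apply]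
      have hns : ¬ (v.1 <:+ (treeRoot k).1) := by
        rw [show (treeRoot k).1 = [] from rfl]
        rw [List.suffix_nil]
        exact hv
      rw [if_neg hns]
      split_ifs <;> norm_num
    · exact pair x y a0 hxy
  intro a b hab
  rw [gqk_adj] at hab
  obtain ⟨-, h | h⟩ := hab
  · exact fbase a b h
  · rw [abs_sub_comm]
    exact fbase b a h

end Potentials
section CurvBounds
open Finset

lemma vTr_eq_iff {q k : ℕ} {x y : TreeVert k} : vTr q k x = vTr q k y ↔ x = y := by
  simp [vTr]

lemma vTr_ne_len {q k : ℕ} {x y : TreeVert k} (h : x.1.length ≠ y.1.length) :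
    vTr q k x ≠ vTr q k y := fun he => h (by rw [vTr_inj he])

lemma sum_childFinset {q k : ℕ} (x : TreeVert k) (hx : x.1.length < k) (g : GVert q k → ℝ) :
    ∑ w ∈ childFinset q k x hx, g w
      = ∑ a : Fin 10, g (vTr q k ⟨a :: x.1, by simpa using hx⟩) := by
  rw [childFinset, Finset.sum_image]
  intro a _ b _ hab
  have := congrArg (fun z : TreeVert k => z.1) (vTr_inj hab)
  simpa using this

lemma child_eq_self_iff {q k : ℕ} (x : TreeVert k) (hne : x.1 ≠ [])
    (hplen : (treeParent x).1.length < k) (a : Fin 10) :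
    vTr q k (⟨a :: (treeParent x).1, by simpa using hplen⟩ : TreeVert k) = vTr q k x
      ↔ a = x.1.head hne := by
  refine vTr_eq_iff.trans (Subtype.ext_iff.trans ?_)
  show a :: x.1.tail = x.1 ↔ _
  constructor
  · intro h
    have h2 := List.cons_head_tail hne
    rw [← h2] at h
    exact (List.cons.injEq _ _ _ _ ▸ h : _ ∧ _).1
  · rintro rfl
    exact List.cons_head_tail hne

lemma tail_len {k : ℕ} (x : TreeVert k) : (treeParent x).1.length = x.1.length - 1 := by
  show x.1.tail.length = _
  rw [List.length_tail]

lemma ricci_leaf {q k : ℕ} (hk : 2 ≤ k) (x : TreeVert k) (hx : x.1.length = k) :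
    ricci (Gqk q k) (vTr q k x) (vTr q k (treeParent x)) ≤ -(1/4) := by
  classical
  have hk1 : 1 ≤ k := by omega
  have hne : x.1 ≠ [] := by intro h; rw [h] at hx; simp at hx; omega
  have hplen : (treeParent x).1.length < k := by rw [tail_len]; omega
  have hbound := ricci_le_of (Gqk q k) (vTr q k x) (vTr q k (treeParent x))
    (fLeaf q k x) {vTr q k (treeParent x)}
    (insert (upVert q k (treeParent x)) (childFinset q k (treeParent x) hplen))
    (nbr_leaf x hx hk1) (nbr_internal (treeParent x) hplen)
    (fLeaf_lip x hx hk1) gqk_reachable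
  have hpx : vTr q k (treeParent x) ≠ vTr q k x :=
    vTr_ne_len (by rw [tail_len]; omega)
  have e1 : fLeaf q k x (vTr q k x) = 2 := by simp [fLeaf]
  have e2 : fLeaf q k x (vTr q k (treeParent x)) = 1 := by
    simp [fLeaf, hpx]
  have e3 : fLeaf q k x (upVert q k (treeParent x)) = 0 := by
    rw [upVert]
    split_ifs with h
    · show (if _ then _ else _) = (0:ℝ)
      rw [if_neg (by simp [vT, vTr]), if_neg (by simp [vT, vTr])]
    · have n1 : vTr q k (treeParent (treeParent x)) ≠ vTr q k x := by
        refine vTr_ne_len ?_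
        rw [tail_len, tail_len]
        omega
      have n2 : vTr q k (treeParent (treeParent x)) ≠ vTr q k (treeParent x) := by
        refine vTr_ne_len ?_
        rw [tail_len, tail_len]
        have : (treeParent x).1.length = k - 1 := by rw [tail_len]; omega
        have h2 : (treeParent x).1.length ≠ 0 := by simpa using h
        omega
      simp [fLeaf, n1, n2]
  have e4 : ∑ w ∈ childFinset q k (treeParent x) hplen, fLeaf q k x w = 2 := by
    rw [sum_childFinset]
    have hv : ∀ a : Fin 10, fLeaf q k x
        (vTr q k (⟨a :: (treeParent x).1, by simpa using hplen⟩ : TreeVert k))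
        = if a = x.1.head hne then 2 else 0 := by
      intro a
      rw [fLeaf]
      by_cases ha : a = x.1.head hne
      · rw [if_pos ((child_eq_self_iff x hne hplen a).mpr ha), if_pos ha]
      · rw [if_neg (fun h => ha ((child_eq_self_iff x hne hplen a).mp h)), if_neg ha]
        exact if_neg (vTr_ne_len (by simp only [List.length_cons]; omega))
    rw [Finset.sum_congr rfl (fun a _ => hv a)]
    simp
  rw [e1, e2, Finset.sum_singleton, e2, Finset.sum_insert (up_not_child _ _), e3, e4,
    Finset.card_singleton, card_nbr_internal] at hbound
  norm_num at hbound
  linarith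

lemma ricci_int {q k : ℕ} (x : TreeVert k) (hne : x.1 ≠ []) (hx : x.1.length < k) :
    ricci (Gqk q k) (vTr q k x) (vTr q k (treeParent x)) ≤ -(3/2) := by
  classical
  have hlen0 : x.1.length ≠ 0 := by simpa using hne
  have hplen : (treeParent x).1.length < k := by rw [tail_len]; omega
  have hbound := ricci_le_of (Gqk q k) (vTr q k x) (vTr q k (treeParent x))
    (fInt q k x)
    (insert (upVert q k x) (childFinset q k x hx))
    (insert (upVert q k (treeParent x)) (childFinset q k (treeParent x) hplen))
    (nbr_internal x hx) (nbr_internal (treeParent x) hplen)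
    (fInt_lip x hne) gqk_reachable
  have nps : ¬ ((x.1 : List (Fin 10)) <:+ (treeParent x).1) := by
    intro h
    have := h.length_le
    rw [tail_len] at this
    omega
  have e1 : fInt q k x (vTr q k x) = 2 := by
    rw [fInt_apply, if_pos (List.suffix_refl x.1), if_pos rfl]
  have e2 : fInt q k x (vTr q k (treeParent x)) = 1 := by
    rw [fInt_apply, if_neg nps, if_pos rfl]
  have e3 : fInt q k x (upVert q k x) = 1 := by
    rw [upVert, if_neg hne]
    exact e2
  have e4 : ∑ w ∈ childFinset q k x hx, fInt q k x w = 30 := by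
    rw [sum_childFinset]
    have hv : ∀ a : Fin 10, fInt q k x
        (vTr q k (⟨a :: x.1, by simpa using hx⟩ : TreeVert k)) = 3 := by
      intro a
      refine (fInt_apply _ _).trans ?_
      rw [if_pos (List.suffix_cons a x.1),
        if_neg (fun h => by
          have := congrArg (fun z : TreeVert k => z.1.length) h
          simp at this)]
    rw [Finset.sum_congr rfl (fun a _ => hv a)]
    simp
    norm_num
  have e5 : fInt q k x (upVert q k (treeParent x)) = 0 := by
    rw [upVert]
    split_ifs with h
    · rfl
    · have hp0 : (treeParent x).1.length ≠ 0 := by simpa using h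
      rw [fInt_apply, if_neg, if_neg]
      · refine fun he => ?_
        have h4 := congrArg (fun z : TreeVert k => z.1.length) he
        simp only [tail_len] at h4
        simp only [tail_len] at hp0
        omega
      · intro hsuf
        have := hsuf.length_le
        rw [tail_len, tail_len] at this
        omega
  have e6 : ∑ w ∈ childFinset q k (treeParent x) hplen, fInt q k x w = 2 := by
    rw [sum_childFinset]
    have hv : ∀ a : Fin 10, fInt q k x
        (vTr q k (⟨a :: (treeParent x).1, by simpa using hplen⟩ : TreeVert k))
        = if a = x.1.head hne then 2 else 0 := by
      intro a
      by_cases ha : a = x.1.head hne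
      · have hax : (⟨a :: (treeParent x).1, by simpa using hplen⟩ : TreeVert k) = x :=
          Subtype.ext (by rw [ha]; exact List.cons_head_tail hne)
        rw [hax, e1, if_pos ha]
      · have h1 : ¬ ((x.1 : List (Fin 10)) <:+
            (⟨a :: (treeParent x).1, by simpa using hplen⟩ : TreeVert k).1) := by
          intro hs
          have hlen : (x.1 : List (Fin 10)).length
              = ((⟨a :: (treeParent x).1, by simpa using hplen⟩ : TreeVert k).1).length := by
            show _ = (a :: x.1.tail).length
            simp only [List.length_cons, List.length_tail]
            omega
          have := hs.eq_of_length hlen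
          exact ha ((child_eq_self_iff (q := q) x hne hplen a).mp
            (vTr_eq_iff.mpr (Subtype.ext this.symm)))
        have h2 : (⟨a :: (treeParent x).1, by simpa using hplen⟩ : TreeVert k)
            ≠ treeParent x := by
          intro he
          have := congrArg (fun z : TreeVert k => z.1.length) he
          simp only [List.length_cons] at this
          omega
        refine (fInt_apply _ _).trans ?_
        rw [if_neg h1, if_neg ha]
        exact if_neg h2
    rw [Finset.sum_congr rfl (fun a _ => hv a)]
    simp
  rw [Finset.sum_insert (up_not_child _ _), Finset.sum_insert (up_not_child _ _),
    e1, e2, e3, e4, e5, e6, card_nbr_internal, card_nbr_internal] at hbound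
  norm_num at hbound
  linarith

end CurvBounds
section EdgeSet
open Finset

noncomputable def Eoth (q k : ℕ) : Finset (Sym2 (GVert q k)) :=
  ({s(vS q k, vT q k), s(vT q k, vTr q k (treeRoot k))} : Finset _) ∪
  Finset.image (fun i => s(vP q k i, vS q k)) Finset.univ ∪
  Finset.image (fun i => s(vP q k i, vT q k)) Finset.univ

noncomputable def Etree (q k : ℕ) : Finset (Sym2 (GVert q k)) :=
  Finset.image (fun x : {x : TreeVert k // x.1 ≠ []} =>
    s(vTr q k x.1, vTr q k (treeParent x.1))) Finset.univ

lemma ricciEdge_mk {q k : ℕ} (a b : GVert q k) :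
    ricciEdge (Gqk q k) s(a, b) = ricci (Gqk q k) a b := rfl

lemma adj_parent {q k : ℕ} (x : TreeVert k) (hne : x.1 ≠ []) :
    (Gqk q k).Adj (vTr q k x) (vTr q k (treeParent x)) := by
  rw [adj_tree_iff]
  exact Or.inr ⟨treeParent x, rfl, x.1.head hne,
    Or.inl (List.cons_head_tail hne).symm⟩

lemma edgeSet_eq (q k : ℕ) :
    (Gqk q k).edgeSet = ↑(Eoth q k ∪ Etree q k) := by
  ext e
  induction e using Sym2.ind with
  | _ a b =>
  rw [SimpleGraph.mem_edgeSet, Finset.mem_coe, Finset.mem_union]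
  constructor
  · intro hab
    rw [gqk_adj] at hab
    obtain ⟨hne, h⟩ := hab
    have main : ∀ c d : GVert q k, gadjBase q k c d →
        s(c, d) ∈ Eoth q k ∨ s(c, d) ∈ Etree q k := by
      rintro c d (⟨rfl, rfl⟩ | ⟨i, rfl, rfl | rfl⟩ | ⟨rfl, rfl⟩ | ⟨u', v', rfl, rfl, a0, h3⟩)
      · left; rw [Eoth]; simp
      · left; rw [Eoth]
        rw [Finset.mem_union, Finset.mem_union]
        left; right
        exact Finset.mem_image.mpr ⟨i, Finset.mem_univ i, rfl⟩
      · left; rw [Eoth]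
        rw [Finset.mem_union]
        right
        exact Finset.mem_image.mpr ⟨i, Finset.mem_univ i, rfl⟩
      · left; rw [Eoth]; simp [Sym2.eq_swap]
      · right
        rw [Etree, Finset.mem_image]
        refine ⟨⟨u', by rw [h3]; simp⟩, Finset.mem_univ _, ?_⟩
        have hpar : treeParent u' = v' := Subtype.ext (by show u'.1.tail = v'.1; rw [h3]; rfl)
        rw [hpar]
    rcases h with h | h
    · exact main a b h
    · rcases main b a h with h' | h'
      · left; rwa [Sym2.eq_swap]
      · right; rwa [Sym2.eq_swap]
  · intro h
    rcases h with h | h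
    · rw [Eoth, Finset.mem_union, Finset.mem_union] at h
      rcases h with (h | h) | h
      · rw [Finset.mem_insert, Finset.mem_singleton] at h
        rcases h with h | h
        · rw [Sym2.eq_iff] at h
          rcases h with ⟨rfl, rfl⟩ | ⟨rfl, rfl⟩
          · exact (gqk_adj _ _).mpr ⟨vS_ne_vT q k, Or.inl (Or.inl ⟨rfl, rfl⟩)⟩
          · exact ((gqk_adj _ _).mpr ⟨vS_ne_vT q k, Or.inl (Or.inl ⟨rfl, rfl⟩)⟩).symm
        · rw [Sym2.eq_iff] at h
          have hadj : (Gqk q k).Adj (vT q k) (vTr q k (treeRoot k)) :=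
            (gqk_adj _ _).mpr ⟨by simp [vT, vTr], Or.inl (Or.inr (Or.inr (Or.inl ⟨rfl, rfl⟩)))⟩
          rcases h with ⟨rfl, rfl⟩ | ⟨rfl, rfl⟩
          · exact hadj
          · exact hadj.symm
      · rw [Finset.mem_image] at h
        obtain ⟨i, -, hi⟩ := h
        have hadj : (Gqk q k).Adj (vP q k i) (vS q k) :=
          (gqk_adj _ _).mpr ⟨by simp [vP, vS], Or.inl (Or.inr (Or.inl ⟨i, rfl, Or.inl rfl⟩))⟩
        rw [Sym2.eq_iff] at hi
        rcases hi with ⟨rfl, rfl⟩ | ⟨rfl, rfl⟩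
        · exact hadj
        · exact hadj.symm
      · rw [Finset.mem_image] at h
        obtain ⟨i, -, hi⟩ := h
        have hadj : (Gqk q k).Adj (vP q k i) (vT q k) :=
          (gqk_adj _ _).mpr ⟨by simp [vP, vT], Or.inl (Or.inr (Or.inl ⟨i, rfl, Or.inr rfl⟩))⟩
        rw [Sym2.eq_iff] at hi
        rcases hi with ⟨rfl, rfl⟩ | ⟨rfl, rfl⟩
        · exact hadj
        · exact hadj.symm
    · rw [Etree, Finset.mem_image] at h
      obtain ⟨x, -, hx⟩ := h
      have hadj := adj_parent (q := q) x.1 x.2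
      rw [Sym2.eq_iff] at hx
      rcases hx with ⟨rfl, rfl⟩ | ⟨rfl, rfl⟩
      · exact hadj
      · exact hadj.symm

end EdgeSet
section Counting
open Finset

lemma geom_sum_nat (k : ℕ) : 9 * (∑ i ∈ Finset.range (k + 1), 10 ^ i) = 10 ^ (k + 1) - 1 := by
  induction k with
  | zero => simp
  | succ k ih =>
    rw [Finset.sum_range_succ, Nat.mul_add, ih]
    have h1 : (10:ℕ) ^ (k + 1 + 1) = 10 * 10 ^ (k + 1) := by ring
    have h2 : (1:ℕ) ≤ 10 ^ (k + 1) := Nat.one_le_pow _ _ (by norm_num)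
    omega

lemma Nk_eq_sum (k : ℕ) : Nk k = ∑ i ∈ Finset.range (k + 1), 10 ^ i := by
  have h := geom_sum_nat k
  rw [Nk]
  omega

lemma Nk_mul (k : ℕ) : 9 * Nk k + 1 = 10 ^ (k + 1) := by
  have h := geom_sum_nat k
  have h2 : (1:ℕ) ≤ 10 ^ (k + 1) := Nat.one_le_pow _ _ (by norm_num)
  rw [Nk_eq_sum]
  omega

lemma Nk_pos (k : ℕ) : 1 ≤ Nk k := by
  rw [Nk_eq_sum]
  calc 1 = ∑ i ∈ Finset.range 1, 10 ^ i := by simp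
  _ ≤ _ := Finset.sum_le_sum_of_subset (by simp)

lemma card_treeVert (k : ℕ) : Fintype.card (TreeVert k) = Nk k := by
  have e : TreeVert k ≃ Σ j : Fin (k + 1), List.Vector (Fin 10) j :=
    { toFun := fun y => ⟨⟨y.1.length, Nat.lt_succ_of_le y.2⟩, ⟨y.1, rfl⟩⟩
      invFun := fun x => ⟨x.2.1, by have h1 := x.2.2; have h2 := x.1.isLt; omega⟩
      left_inv := fun y => Subtype.ext rfl
      right_inv := by
        rintro ⟨⟨j, hj⟩, l, hl⟩
        obtain rfl : l.length = j := hl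
        rfl }
  rw [Fintype.card_congr e, Fintype.card_sigma, Nk_eq_sum,
    ← Fin.sum_univ_eq_sum_range (fun i => 10 ^ i) (k + 1)]
  congr 1
  ext j
  rw [card_vector, Fintype.card_fin]

lemma card_nonroot (k : ℕ) : Fintype.card {x : TreeVert k // x.1 ≠ []} = Nk k - 1 := by
  classical
  rw [Fintype.card_subtype_compl (p := fun x : TreeVert k => x.1 = []), card_treeVert]
  congr 1
  rw [Fintype.card_congr (Equiv.subtypeEquivRight (q := fun x : TreeVert k => x = treeRoot k)
    (fun x => by
      constructor
      · intro h; exact Subtype.ext h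
      · intro h; rw [h]; rfl))]
  exact Fintype.card_subtype_eq (treeRoot k)

/-- auxiliary injection from leaves into vectors of length `k` -/
def leafVec (k : ℕ) (x : {x : TreeVert k // x.1 ≠ []}) : List.Vector (Fin 10) k :=
  ⟨x.1.1 ++ List.replicate (k - x.1.1.length) 0, by
    have := x.1.2
    simp only [List.length_append, List.length_replicate]
    omega⟩

lemma leaves_le (k : ℕ) :
    ((Finset.univ.filter
      (fun x : {x : TreeVert k // x.1 ≠ []} => x.1.1.length = k)).card) ≤ 10 ^ k := by
  classical
  have h := Finset.card_le_card_of_injOn (leafVec k)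
    (s := Finset.univ.filter (fun x : {x : TreeVert k // x.1 ≠ []} => x.1.1.length = k))
    (t := Finset.univ)
    (fun x _ => Finset.mem_univ _)
    (by
      intro x hx y hy hxy
      rw [Finset.coe_filter, Set.mem_setOf_eq] at hx hy
      have hx2 := hx.2
      have hy2 := hy.2
      have ex : k - x.1.1.length = 0 := by omega
      have ey : k - y.1.1.length = 0 := by omega
      rw [leafVec, leafVec] at hxy
      replace hxy := congrArg Subtype.val hxy
      simp only [ex, ey] at hxy
      simp only [List.replicate_zero, List.append_nil] at hxy
      exact Subtype.ext (Subtype.ext hxy))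
  calc _ ≤ (Finset.univ : Finset (List.Vector (Fin 10) k)).card := h
  _ = 10 ^ k := by rw [Finset.card_univ, card_vector, Fintype.card_fin]

lemma etree_inj (q k : ℕ) : ∀ x ∈ (Finset.univ : Finset {x : TreeVert k // x.1 ≠ []}),
    ∀ y ∈ (Finset.univ : Finset {x : TreeVert k // x.1 ≠ []}),
    s(vTr q k x.1, vTr q k (treeParent x.1)) = s(vTr q k y.1, vTr q k (treeParent y.1)) →
    x = y := by
  intro x _ y _ hxy
  rw [Sym2.eq_iff] at hxy
  rcases hxy with ⟨h1, -⟩ | ⟨h1, h2⟩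
  · exact Subtype.ext (vTr_inj h1)
  · exfalso
    have e1 := congrArg (fun z : TreeVert k => z.1.length) (vTr_inj h1)
    have e2 := congrArg (fun z : TreeVert k => z.1.length) (vTr_inj h2)
    simp only [tail_len] at e1 e2
    have hx0 : x.1.1.length ≠ 0 := by simpa using x.2
    have hy0 : y.1.1.length ≠ 0 := by simpa using y.2
    omega

lemma card_Etree (q k : ℕ) : (Etree q k).card = Nk k - 1 := by
  rw [Etree, Finset.card_image_of_injOn (etree_inj q k), Finset.card_univ, card_nonroot]

lemma disj_pt (q k : ℕ) : Disjoint (Eoth q k) (Etree q k) := by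
  rw [Finset.disjoint_right]
  intro e he ho
  rw [Etree, Finset.mem_image] at he
  obtain ⟨x, -, rfl⟩ := he
  rw [Eoth, Finset.mem_union, Finset.mem_union, Finset.mem_insert, Finset.mem_singleton,
    Finset.mem_image, Finset.mem_image] at ho
  rcases ho with ((h | h) | ⟨i, -, h⟩) | ⟨i, -, h⟩
  · rw [Sym2.eq_iff] at h
    rcases h with ⟨h, -⟩ | ⟨h, -⟩ <;> simp [vS, vT, vTr] at h
  · rw [Sym2.eq_iff] at h
    rcases h with ⟨h, -⟩ | ⟨-, h⟩ <;> simp [vT, vTr] at h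
  · rw [Sym2.eq_iff] at h
    rcases h with ⟨h, -⟩ | ⟨-, h⟩ <;> simp [vP, vS, vTr] at h
  · rw [Sym2.eq_iff] at h
    rcases h with ⟨h, -⟩ | ⟨-, h⟩ <;> simp [vP, vT, vTr] at h

lemma card_Eoth (q k : ℕ) : (Eoth q k).card = 2 * q + 2 := by
  classical
  have hinjS : ∀ x ∈ (Finset.univ : Finset (Fin q)), ∀ y ∈ (Finset.univ : Finset (Fin q)),
      s(vP q k x, vS q k) = s(vP q k y, vS q k) → x = y := by
    intro i _ j _ h
    rw [Sym2.eq_iff] at h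
    rcases h with ⟨h1, -⟩ | ⟨h1, -⟩
    · simpa [vP] using h1
    · exact absurd h1 (by simp [vP, vS])
  have hinjT : ∀ x ∈ (Finset.univ : Finset (Fin q)), ∀ y ∈ (Finset.univ : Finset (Fin q)),
      s(vP q k x, vT q k) = s(vP q k y, vT q k) → x = y := by
    intro i _ j _ h
    rw [Sym2.eq_iff] at h
    rcases h with ⟨h1, -⟩ | ⟨h1, -⟩
    · simpa [vP] using h1
    · exact absurd h1 (by simp [vP, vT])
  have c1 : ({s(vS q k, vT q k), s(vT q k, vTr q k (treeRoot k))} :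
      Finset (Sym2 (GVert q k))).card = 2 := by
    rw [Finset.card_insert_of_notMem (by
      rw [Finset.mem_singleton, Sym2.eq_iff]
      rintro (⟨h, -⟩ | ⟨h, -⟩)
      · exact vS_ne_vT q k h
      · simp [vS, vTr] at h), Finset.card_singleton]
  have d1 : Disjoint ({s(vS q k, vT q k), s(vT q k, vTr q k (treeRoot k))} :
      Finset (Sym2 (GVert q k))) (Finset.image (fun i => s(vP q k i, vS q k)) Finset.univ) := by
    rw [Finset.disjoint_right]
    intro e he ho
    rw [Finset.mem_image] at he
    obtain ⟨i, -, rfl⟩ := he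
    rw [Finset.mem_insert, Finset.mem_singleton] at ho
    rcases ho with h | h <;> rw [Sym2.eq_iff] at h <;>
      rcases h with ⟨h, -⟩ | ⟨h, -⟩ <;> simp [vP, vS, vT, vTr] at h
  have d2 : Disjoint (({s(vS q k, vT q k), s(vT q k, vTr q k (treeRoot k))} :
      Finset (Sym2 (GVert q k))) ∪ Finset.image (fun i => s(vP q k i, vS q k)) Finset.univ)
      (Finset.image (fun i => s(vP q k i, vT q k)) Finset.univ) := by
    rw [Finset.disjoint_right]
    intro e he ho
    rw [Finset.mem_image] at he
    obtain ⟨i, -, rfl⟩ := he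
    rw [Finset.mem_union, Finset.mem_insert, Finset.mem_singleton, Finset.mem_image] at ho
    rcases ho with (h | h) | ⟨j, -, h⟩
    · rw [Sym2.eq_iff] at h
      rcases h with ⟨h, -⟩ | ⟨h, -⟩ <;> simp [vP, vS, vT] at h
    · rw [Sym2.eq_iff] at h
      rcases h with ⟨h, -⟩ | ⟨h, -⟩ <;> simp [vP, vT, vTr] at h
    · rw [Sym2.eq_iff] at h
      rcases h with ⟨-, h⟩ | ⟨h, -⟩ <;> simp [vP, vS, vT] at h
  rw [Eoth, Finset.card_union_of_disjoint d2, Finset.card_union_of_disjoint d1, c1,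
    Finset.card_image_of_injOn hinjS, Finset.card_image_of_injOn hinjT, Finset.card_univ,
    Fintype.card_fin]
  ring

end Counting
lemma ricciEdge_le_one {q k : ℕ} (e : Sym2 (GVert q k)) : ricciEdge (Gqk q k) e ≤ 1 := by
  induction e using Sym2.ind with
  | _ a b =>
    rw [ricciEdge_mk]
    exact ricci_le_one _ a b

/-- For all integers `k ≥ 2` and all integers `q` with
`1 ≤ q ≤ 10^(k−2)`, the graph `G_{q,k}` has `m = N_k + 2q + 1` edges and satisfies
`(1/m)·Σ_{h ∈ E} C_{G_{q,k}}(h) ≤ −3/10`; in particular, for every step size `s > 0`,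
the normalization correction term `(s/m)·Σ_{h ∈ E} C_{G_{q,k}}(h)` of the normalized
Ricci flow is at most `−(3/10)·s`. -/
theorem average_curvature_negative (q k : ℕ) (hk : 2 ≤ k) (hq1 : 1 ≤ q)
    (hq2 : q ≤ 10 ^ (k - 2)) :
    Nat.card (Gqk q k).edgeSet = Nk k + 2 * q + 1 ∧
    (1 / ((Nk k + 2 * q + 1 : ℕ) : ℝ)) *
        ∑ᶠ h ∈ (Gqk q k).edgeSet, ricciEdge (Gqk q k) h ≤ -(3 / 10) ∧
    ∀ s : ℝ, 0 < s →
      (s / ((Nk k + 2 * q + 1 : ℕ) : ℝ)) *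
          ∑ᶠ h ∈ (Gqk q k).edgeSet, ricciEdge (Gqk q k) h ≤ -(3 / 10) * s := by
  classical
  have hNkpos := Nk_pos k
  have hcard : (Eoth q k ∪ Etree q k).card = Nk k + 2 * q + 1 := by
    rw [Finset.card_union_of_disjoint (disj_pt q k), card_Eoth, card_Etree]
    omega
  have part1 : Nat.card (Gqk q k).edgeSet = Nk k + 2 * q + 1 := by
    rw [edgeSet_eq, Nat.card_coe_set_eq, Set.ncard_coe_finset, hcard]
  -- numeric facts
  have hL1 : (100 : ℕ) ≤ 10 ^ k := by
    calc (100 : ℕ) = 10 ^ 2 := by norm_num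
    _ ≤ 10 ^ k := Nat.pow_le_pow_right (by norm_num) hk
  have hqL : 100 * q ≤ 10 ^ k := by
    calc 100 * q ≤ 100 * 10 ^ (k - 2) := by omega
    _ = 10 ^ k := by
        rw [show (100 : ℕ) = 10 ^ 2 by norm_num, ← pow_add,
          show 2 + (k - 2) = k by omega]
  have hNk10 : 9 * Nk k + 1 = 10 * 10 ^ k := by
    have := Nk_mul k
    rw [pow_succ] at this
    omega
  set A : ℕ := ((Finset.univ.filter
    (fun x : {x : TreeVert k // x.1 ≠ []} => x.1.1.length = k)).card) with hA
  set B : ℕ := ((Finset.univ.filter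
    (fun x : {x : TreeVert k // x.1 ≠ []} => ¬ x.1.1.length = k)).card) with hB
  have hAB : A + B = Nk k - 1 := by
    rw [hA, hB, Finset.card_filter_add_card_filter_not, Finset.card_univ, card_nonroot]
  have hA10 : A ≤ 10 ^ k := leaves_le k
  -- the sum bound
  have htree : ∑ e ∈ Etree q k, ricciEdge (Gqk q k) e
      ≤ (A : ℝ) * (-(1/4)) + (B : ℝ) * (-(3/2)) := by
    rw [Etree, Finset.sum_image (etree_inj q k)]
    have hstep : ∑ x : {x : TreeVert k // x.1 ≠ []},
        ricciEdge (Gqk q k) s(vTr q k x.1, vTr q k (treeParent x.1))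
        ≤ ∑ x : {x : TreeVert k // x.1 ≠ []},
          (if x.1.1.length = k then (-(1/4) : ℝ) else -(3/2)) := by
      apply Finset.sum_le_sum
      intro x _
      rw [ricciEdge_mk]
      by_cases hlen : x.1.1.length = k
      · rw [if_pos hlen]
        exact ricci_leaf hk x.1 hlen
      · rw [if_neg hlen]
        exact ricci_int x.1 x.2 (lt_of_le_of_ne x.1.2 hlen)
    refine hstep.trans (le_of_eq ?_)
    rw [Finset.sum_ite, Finset.sum_const, Finset.sum_const, nsmul_eq_mul, nsmul_eq_mul]
  have hoth : ∑ e ∈ Eoth q k, ricciEdge (Gqk q k) e ≤ (2 * q + 2 : ℝ) := by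
    calc ∑ e ∈ Eoth q k, ricciEdge (Gqk q k) e ≤ (Eoth q k).card • (1:ℝ) :=
      Finset.sum_le_card_nsmul _ _ _ (fun e _ => ricciEdge_le_one e)
    _ = (2 * q + 2 : ℝ) := by rw [card_Eoth]; push_cast; ring
  have hsum : ∑ e ∈ (Eoth q k ∪ Etree q k), ricciEdge (Gqk q k) e
      ≤ -(3/10) * ((Nk k + 2 * q + 1 : ℕ) : ℝ) := by
    rw [Finset.sum_union (disj_pt q k)]
    have r1 : ((A : ℝ) + B) = (Nk k : ℝ) - 1 := by
      have : ((A + B : ℕ) : ℝ) = ((Nk k - 1 : ℕ) : ℝ) := by rw [hAB]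
      rw [Nat.cast_add, Nat.cast_sub hNkpos] at this
      simpa using this
    have r2 : (A : ℝ) ≤ (10 : ℝ) ^ k := by exact_mod_cast hA10
    have r3 : 9 * (Nk k : ℝ) + 1 = 10 * (10 : ℝ) ^ k := by exact_mod_cast hNk10
    have r4 : 100 * (q : ℝ) ≤ (10 : ℝ) ^ k := by exact_mod_cast hqL
    have r5 : (100 : ℝ) ≤ (10 : ℝ) ^ k := by exact_mod_cast hL1
    have rcast : ((Nk k + 2 * q + 1 : ℕ) : ℝ) = (Nk k : ℝ) + 2 * q + 1 := by push_cast; ring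
    rw [rcast]
    linarith
  have hm0 : (0 : ℝ) < ((Nk k + 2 * q + 1 : ℕ) : ℝ) := by
    have : 0 < Nk k + 2 * q + 1 := by omega
    exact_mod_cast this
  have part2 : (1 / ((Nk k + 2 * q + 1 : ℕ) : ℝ)) *
      ∑ᶠ h ∈ (Gqk q k).edgeSet, ricciEdge (Gqk q k) h ≤ -(3 / 10) := by
    rw [edgeSet_eq, finsum_mem_coe_finset]
    calc (1 / ((Nk k + 2 * q + 1 : ℕ) : ℝ)) *
        ∑ e ∈ (Eoth q k ∪ Etree q k), ricciEdge (Gqk q k) e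
        ≤ (1 / ((Nk k + 2 * q + 1 : ℕ) : ℝ)) * (-(3/10) * ((Nk k + 2 * q + 1 : ℕ) : ℝ)) :=
          mul_le_mul_of_nonneg_left hsum (by positivity)
      _ = -(3/10) := by field_simp
  refine ⟨part1, part2, fun s hs => ?_⟩
  calc (s / ((Nk k + 2 * q + 1 : ℕ) : ℝ)) *
      ∑ᶠ h ∈ (Gqk q k).edgeSet, ricciEdge (Gqk q k) h
      = s * ((1 / ((Nk k + 2 * q + 1 : ℕ) : ℝ)) *
        ∑ᶠ h ∈ (Gqk q k).edgeSet, ricciEdge (Gqk q k) h) := by ring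
    _ ≤ s * (-(3/10)) := mul_le_mul_of_nonneg_left part2 hs.le
    _ = -(3/10) * s := by ring
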